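/- arXiv:1911.05888 — 2 statements merged into one kernel-verified Lean document; each statement's English description precedes it below -/
import Mathlib

section
/- Let A be an n×n real symmetric positive semidefinite matrix, E an m×m real symmetric positive semidefinite matrix, and B an n×m real matrix, and let 𝒜 = [[A, B], [Bᵀ, −E]] be the associated symmetric saddle point matrix. Then a pair (u, p) ∈ ℝⁿ × ℝᵐ satisfies 𝒜(u, p) = 0 if and only if A u = 0, E p = 0, B p = 0, and Bᵀ u = 0. In particular, the kernel of 𝒜 is the product of the set {u : Au = 0, Bᵀu = 0} with the set {p : Ep = 0, Bp = 0}. -/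
open Matrix

theorem saddle_point_kernel_aux (n m : ℕ)
    (A : Matrix (Fin n) (Fin n) ℝ) (E : Matrix (Fin m) (Fin m) ℝ)
    (B : Matrix (Fin n) (Fin m) ℝ)
    (hA : A.PosSemidef) (hE : E.PosSemidef) (u : Fin n → ℝ) (p : Fin m → ℝ) :
    (Matrix.fromBlocks A B Bᵀ (-E)).mulVec (Sum.elim u p) = 0 ↔
      (A.mulVec u = 0 ∧ E.mulVec p = 0 ∧ B.mulVec p = 0 ∧ Bᵀ.mulVec u = 0) := by
  rw [fromBlocks_mulVec]
  simp only [Sum.elim_comp_inl, Sum.elim_comp_inr]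
  constructor
  · intro h
    have h1 : A *ᵥ u + B *ᵥ p = 0 := funext fun i => congrFun h (Sum.inl i)
    have h2 : Bᵀ *ᵥ u + (-E) *ᵥ p = 0 := funext fun i => congrFun h (Sum.inr i)
    have key : p ⬝ᵥ Bᵀ *ᵥ u = u ⬝ᵥ B *ᵥ p := by
      rw [mulVec_transpose, dotProduct_comm, dotProduct_mulVec]
    have e1 : u ⬝ᵥ A *ᵥ u + u ⬝ᵥ B *ᵥ p = 0 := by
      rw [← dotProduct_add, h1, dotProduct_zero]
    have e2 : u ⬝ᵥ B *ᵥ p - p ⬝ᵥ E *ᵥ p = 0 := by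
      have := congrArg (p ⬝ᵥ ·) h2
      simpa [dotProduct_add, neg_mulVec, dotProduct_neg, key, sub_eq_add_neg] using this
    have e3 : u ⬝ᵥ A *ᵥ u + p ⬝ᵥ E *ᵥ p = 0 := by linarith
    have hAu : u ⬝ᵥ A *ᵥ u = 0 := by
      have := hA.dotProduct_mulVec_nonneg u; have := hE.dotProduct_mulVec_nonneg p
      simp only [RCLike.re_to_real, star_trivial] at *
      linarith
    have hEp : p ⬝ᵥ E *ᵥ p = 0 := by linarith
    have hAu0 : A *ᵥ u = 0 := (hA.dotProduct_mulVec_zero_iff u).mp (by simpa using hAu)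
    have hEp0 : E *ᵥ p = 0 := (hE.dotProduct_mulVec_zero_iff p).mp (by simpa using hEp)
    refine ⟨hAu0, hEp0, ?_, ?_⟩
    · rw [hAu0, zero_add] at h1; exact h1
    · rw [neg_mulVec, hEp0, neg_zero, add_zero] at h2; exact h2
  · rintro ⟨h1, h2, h3, h4⟩
    rw [h1, h3, h4, neg_mulVec, h2]
    simp

/-- For the symmetric saddle point matrix 𝒜 = [[A, B], [Bᵀ, −E]] with A, E
symmetric positive semidefinite, (u, p) is in the kernel of 𝒜 iff Au = 0, Ep = 0, Bp = 0
and Bᵀu = 0; in particular the kernel of 𝒜 is the product of the corresponding sets. -/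
theorem saddle_point_kernel (n m : ℕ) (hn : 0 < n) (hm : 0 < m)
    (A : Matrix (Fin n) (Fin n) ℝ) (E : Matrix (Fin m) (Fin m) ℝ)
    (B : Matrix (Fin n) (Fin m) ℝ)
    (hA : A.PosSemidef) (hE : E.PosSemidef) :
    (∀ (u : Fin n → ℝ) (p : Fin m → ℝ),
      (Matrix.fromBlocks A B Bᵀ (-E)).mulVec (Sum.elim u p) = 0 ↔
        (A.mulVec u = 0 ∧ E.mulVec p = 0 ∧ B.mulVec p = 0 ∧ Bᵀ.mulVec u = 0))
    ∧ {x : (Fin n ⊕ Fin m) → ℝ | (Matrix.fromBlocks A B Bᵀ (-E)).mulVec x = 0}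
      = {x | (A.mulVec (x ∘ Sum.inl) = 0 ∧ Bᵀ.mulVec (x ∘ Sum.inl) = 0)
           ∧ (E.mulVec (x ∘ Sum.inr) = 0 ∧ B.mulVec (x ∘ Sum.inr) = 0)} := by
  refine ⟨saddle_point_kernel_aux n m A E B hA hE, ?_⟩
  ext x
  have hx : x = Sum.elim (x ∘ Sum.inl) (x ∘ Sum.inr) := (Sum.elim_comp_inl_inr x).symm
  simp only [Set.mem_setOf_eq]
  rw [hx, saddle_point_kernel_aux n m A E B hA hE]
  tauto
end

section
/- Let A be an n×n real symmetric positive definite matrix, E an m×m real symmetric positive semidefinite matrix, and B an n×m real matrix, and let 𝒜 = [[A, B], [Bᵀ, −E]] be the associated symmetric saddle point matrix. Then the following are equivalent: (i) 𝒜 is invertible; (ii) the Schur complement E + Bᵀ A⁻¹ B is positive definite; (iii) there is no nonzero p ∈ ℝᵐ with E p = 0 and B p = 0. -/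
open Matrix

/-- For A symmetric positive definite, E symmetric positive semidefinite and
B arbitrary, the saddle point matrix 𝒜 = [[A, B], [Bᵀ, −E]] is invertible iff the Schur
complement E + Bᵀ A⁻¹ B is positive definite, iff there is no nonzero p with Ep = 0 and
Bp = 0. -/
theorem saddle_point_invertible_iff (n m : ℕ) (hn : 0 < n) (hm : 0 < m)
    (A : Matrix (Fin n) (Fin n) ℝ) (E : Matrix (Fin m) (Fin m) ℝ)
    (B : Matrix (Fin n) (Fin m) ℝ)
    (hA : A.PosDef) (hE : E.PosSemidef) :
    (IsUnit (Matrix.fromBlocks A B Bᵀ (-E)) ↔ (E + Bᵀ * A⁻¹ * B).PosDef)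
    ∧ (IsUnit (Matrix.fromBlocks A B Bᵀ (-E)) ↔
        ∀ p : Fin m → ℝ, E.mulVec p = 0 → B.mulVec p = 0 → p = 0) := by
  set S : Matrix (Fin m) (Fin m) ℝ := E + Bᵀ * A⁻¹ * B with hSdef
  have hAinv : (A⁻¹).PosDef := hA.inv
  have hM : (Bᵀ * A⁻¹ * B).PosSemidef := by
    have := hAinv.posSemidef.conjTranspose_mul_mul_same B
    rwa [conjTranspose_eq_transpose_of_trivial] at this
  have hS : S.PosSemidef := hE.add hM
  -- kernel of S equals intersection of kernels of E and B
  have hker : ∀ p : Fin m → ℝ, S *ᵥ p = 0 ↔ (E *ᵥ p = 0 ∧ B *ᵥ p = 0) := by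
    intro p
    constructor
    · intro hp
      have h0 : p ⬝ᵥ (S *ᵥ p) = 0 := by rw [hp, dotProduct_zero]
      have hsplit : p ⬝ᵥ (E *ᵥ p) + p ⬝ᵥ ((Bᵀ * A⁻¹ * B) *ᵥ p) = 0 := by
        rw [hSdef, add_mulVec, dotProduct_add] at h0
        exact h0
      have hE0 : (0:ℝ) ≤ p ⬝ᵥ (E *ᵥ p) := by simpa using hE.dotProduct_mulVec_nonneg p
      have hM0 : (0:ℝ) ≤ p ⬝ᵥ ((Bᵀ * A⁻¹ * B) *ᵥ p) := by simpa using hM.dotProduct_mulVec_nonneg p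
      have hE1 : p ⬝ᵥ (E *ᵥ p) = 0 := le_antisymm (by linarith) hE0
      have hM1 : p ⬝ᵥ ((Bᵀ * A⁻¹ * B) *ᵥ p) = 0 := by linarith
      refine ⟨?_, ?_⟩
      · have := (hE.dotProduct_mulVec_zero_iff p).mp (by simpa using hE1)
        exact this
      · by_contra hBp
        have hq : (B *ᵥ p) ⬝ᵥ (A⁻¹ *ᵥ (B *ᵥ p)) = 0 := by
          rw [← hM1]
          simp [Matrix.mul_assoc, ← mulVec_mulVec, dotProduct_mulVec, vecMul_transpose]
        have := hAinv.dotProduct_mulVec_pos hBp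
        simp only [star_trivial] at this
        rw [hq] at this
        exact lt_irrefl _ this
    · rintro ⟨h1, h2⟩
      rw [hSdef, add_mulVec, h1, Matrix.mul_assoc, ← mulVec_mulVec, ← mulVec_mulVec, h2]
      simp
  -- S posdef iff kernel trivial
  have hSiff : S.PosDef ↔ (∀ p : Fin m → ℝ, E *ᵥ p = 0 → B *ᵥ p = 0 → p = 0) := by
    constructor
    · intro hSpd p h1 h2
      by_contra hp
      have := hSpd.dotProduct_mulVec_pos hp
      have hz : S *ᵥ p = 0 := (hker p).mpr ⟨h1, h2⟩
      simp only [star_trivial, hz, dotProduct_zero] at this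
      exact lt_irrefl _ this
    · intro h
      refine PosDef.of_dotProduct_mulVec_pos hS.1 (fun p hp => ?_)
      have hSp : S *ᵥ p ≠ 0 := fun hz => hp (h p ((hker p).mp hz).1 ((hker p).mp hz).2)
      have hne : p ⬝ᵥ (S *ᵥ p) ≠ 0 := fun hz => hSp ((hS.dotProduct_mulVec_zero_iff p).mp (by simpa using hz))
      have hge : (0:ℝ) ≤ p ⬝ᵥ (S *ᵥ p) := by simpa using hS.dotProduct_mulVec_nonneg p
      simpa using lt_of_le_of_ne hge (Ne.symm hne)
  -- det S ≠ 0 iff kernel trivial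
  have hdetiff : S.det ≠ 0 ↔ (∀ p : Fin m → ℝ, E *ᵥ p = 0 → B *ᵥ p = 0 → p = 0) := by
    rw [Ne, ← Matrix.exists_mulVec_eq_zero_iff]
    push_neg
    constructor
    · intro h p h1 h2
      by_contra hp
      exact (h p hp) ((hker p).mpr ⟨h1, h2⟩)
    · intro h p hp hz
      exact hp (h p ((hker p).mp hz).1 ((hker p).mp hz).2)
  -- invertibility of the saddle point matrix iff det S ≠ 0
  haveI : Invertible A := hA.isUnit.invertible
  have hdetA : A.det ≠ 0 := hA.det_pos.ne'
  have hunit : IsUnit (Matrix.fromBlocks A B Bᵀ (-E)) ↔ S.det ≠ 0 := by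
    rw [Matrix.isUnit_iff_isUnit_det, Matrix.det_fromBlocks₁₁, isUnit_iff_ne_zero, mul_ne_zero_iff]
    have hinv : ⅟A = A⁻¹ := invOf_eq_nonsing_inv A
    have : (-E - Bᵀ * ⅟A * B) = -S := by rw [hinv, hSdef]; abel
    rw [this, det_neg]
    constructor
    · rintro ⟨-, h⟩ hz
      exact h (by rw [hz, mul_zero])
    · intro h
      refine ⟨hdetA, fun hz => h ?_⟩
      rcases mul_eq_zero.mp hz with h1 | h1
      · exact absurd h1 (by positivity)
      · exact h1
  exact ⟨hunit.trans (hdetiff.trans hSiff.symm), hunit.trans hdetiff⟩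
end
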